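/- Let c, k, α be real numbers with 0 < k, 4k < c, and 0 < α < √((c − 4k)/(c − k)). Then for every λ ∈ ℂ with Re λ ≥ 0, the cubic polynomial p(r) = (c − k)r³ − λr² − (c − 4k)r + λ has, counted with multiplicity, exactly one root r with Re r < −α and exactly two roots r with Re r > −α; in particular it has no root with Re r = −α. -/

import Mathlib

open Polynomial

namespace DPWeighted

/-- The factored form of the characteristic polynomial, as a scalar identity. -/
def Fct (c k : ℝ) (lam r s t : ℂ) : Prop :=
  ∀ z : ℂ, ((c:ℂ)-(k:ℂ)) * z^3 - lam * z^2 - ((c:ℂ)-4*(k:ℂ))*z + lam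
      = ((c:ℂ)-(k:ℂ)) * ((z - r) * ((z - s) * (z - t)))

noncomputable def N (c k α : ℝ) (lam : ℂ) : ℕ :=
  Multiset.card
    (((C ((c : ℂ) - (k : ℂ)) * X ^ 3 - C lam * X ^ 2
        - C ((c : ℂ) - 4 * (k : ℂ)) * X + C lam : ℂ[X]).roots).filter
      fun r => r.re < -α)

lemma noline (c k α : ℝ) (hk : 0 < k) (hck : 4*k < c) (hα0 : 0 < α)
    (hα : α < Real.sqrt ((c-4*k)/(c-k)))
    (lam : ℂ) (hlam : 0 ≤ lam.re) (r : ℂ)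
    (hr : ((c:ℂ)-(k:ℂ)) * r^3 - lam * r^2 - ((c:ℂ)-4*(k:ℂ))*r + lam = 0) : r.re ≠ -α := by
  have hak : (0:ℝ) < c - k := by linarith
  have hbk : (0:ℝ) < c - 4*k := by linarith
  have hα2 : α^2 * (c-k) < c - 4*k := by
    have h1 : α^2 < (c-4*k)/(c-k) := by
      have := (Real.lt_sqrt hα0.le).mp hα
      linarith [this]
    calc α^2 * (c-k) < ((c-4*k)/(c-k)) * (c-k) := by nlinarith
    _ = c - 4*k := by field_simp
  intro heq
  set x := r.re with hx
  set y := r.im with hy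
  have hre := congrArg Complex.re hr
  have him := congrArg Complex.im hr
  simp only [Complex.add_re, Complex.sub_re, Complex.mul_re, Complex.mul_im,
    Complex.add_im, Complex.sub_im, Complex.ofReal_re, Complex.ofReal_im,
    pow_succ, pow_zero, one_mul, Complex.one_re, Complex.one_im, Complex.zero_re,
    Complex.zero_im, Complex.re_ofNat, Complex.im_ofNat] at hre him
  have key : lam.re * ((x^2 - y^2 - 1)^2 + (2*x*y)^2)
      = x * ((c-k)*(y^2)^2 + (2*(c-k)*x^2 + 3*(c-k) - (c-4*k))*y^2
          + ((c-k)*x^2 - (c-4*k))*(x^2-1)) := by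
    linear_combination (-(x^2 - y^2 - 1)) * hre + (-(2*x*y)) * him
  rw [heq] at key
  have hG : 0 < (c-k)*(y^2)^2 + (2*(c-k)*(-α)^2 + 3*(c-k) - (c-4*k))*y^2
      + ((c-k)*(-α)^2 - (c-4*k))*((-α)^2-1) := by
    have h1 : 0 ≤ (c-k)*(y^2)^2 := by positivity
    have h2 : 0 ≤ (2*(c-k)*(-α)^2 + 3*(c-k) - (c-4*k))*y^2 := by
      nlinarith [sq_nonneg y, sq_nonneg α]
    have h3 : 0 < ((c-k)*(-α)^2 - (c-4*k))*((-α)^2-1) := by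
      have hA : (c-k)*(-α)^2 - (c-4*k) < 0 := by nlinarith
      have hB : (-α)^2 - 1 < 0 := by nlinarith
      exact mul_pos_of_neg_of_neg hA hB
    linarith
  have hL : 0 ≤ lam.re * (((-α)^2 - y^2 - 1)^2 + (2*(-α)*y)^2) := by positivity
  linarith [mul_pos hα0 hG]

lemma exists_fct (c k : ℝ) (hak : (0:ℝ) < c - k) (lam : ℂ) :
    ∃ r s t : ℂ, Fct c k lam r s t := by
  have hA : ((c:ℂ) - (k:ℂ)) ≠ 0 := by
    intro h
    have h2 : ((c - k : ℝ) : ℂ) = 0 := by push_cast; linear_combination h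
    have : (c - k : ℝ) = 0 := by exact_mod_cast h2
    linarith
  set p : ℂ[X] := C ((c:ℂ)-(k:ℂ)) * X^3 - C lam * X^2 - C ((c:ℂ)-4*(k:ℂ)) * X + C lam with hp
  have hdeg : p.natDegree = 3 := by
    unfold p
    compute_degree!
    exact ne_of_gt hak
  have hsp : p.Splits := IsAlgClosed.splits p
  have hcard : Multiset.card p.roots = 3 := by
    rw [(Polynomial.splits_iff_card_roots).mp hsp, hdeg]
  obtain ⟨r, s, t, hrst⟩ := Multiset.card_eq_three.mp hcard
  have hlc : p.leadingCoeff = (c:ℂ) - (k:ℂ) := by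
    rw [Polynomial.leadingCoeff, hdeg]
    unfold p
    simp [coeff_add, coeff_sub, sub_mul, coeff_C_mul, coeff_X_pow, coeff_C, coeff_X]
  have heq := Polynomial.Splits.eq_prod_roots hsp
  rw [hrst, hlc] at heq
  refine ⟨r, s, t, fun z => ?_⟩
  have h3 := congrArg (Polynomial.eval z) heq
  simpa [hp, mul_assoc] using h3

lemma roots_eq (c k : ℝ) (hak : (0:ℝ) < c - k) (lam r s t : ℂ)
    (hF : Fct c k lam r s t) :
    (C ((c : ℂ) - (k : ℂ)) * X ^ 3 - C lam * X ^ 2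
        - C ((c : ℂ) - 4 * (k : ℂ)) * X + C lam : ℂ[X]).roots = {r, s, t} := by
  have hA : ((c:ℂ) - (k:ℂ)) ≠ 0 := by
    intro h
    have h2 : ((c - k : ℝ) : ℂ) = 0 := by push_cast; linear_combination h
    have : (c - k : ℝ) = 0 := by exact_mod_cast h2
    linarith
  have hpq : (C ((c : ℂ) - (k : ℂ)) * X ^ 3 - C lam * X ^ 2
        - C ((c : ℂ) - 4 * (k : ℂ)) * X + C lam : ℂ[X])
      = C ((c:ℂ)-(k:ℂ)) * ((X - C r) * ((X - C s) * (X - C t))) := by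
    apply Polynomial.funext
    intro z
    simpa using hF z
  rw [hpq, Polynomial.roots_C_mul _ hA,
    Polynomial.roots_mul (mul_ne_zero (X_sub_C_ne_zero r)
      (mul_ne_zero (X_sub_C_ne_zero s) (X_sub_C_ne_zero t))),
    Polynomial.roots_mul (mul_ne_zero (X_sub_C_ne_zero s) (X_sub_C_ne_zero t)),
    roots_X_sub_C, roots_X_sub_C, roots_X_sub_C]
  rfl

lemma N_fct (c k α : ℝ) (hak : (0:ℝ) < c - k) (lam r s t : ℂ)
    (hF : Fct c k lam r s t) :
    N c k α lam = (if r.re < -α then 1 else 0) + ((if s.re < -α then 1 else 0)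
      + (if t.re < -α then 1 else 0)) := by
  rw [N, roots_eq c k hak lam r s t hF]
  simp only [Multiset.insert_eq_cons, Multiset.filter_cons, Multiset.filter_singleton]
  split_ifs <;> simp

lemma root_bound (c k : ℝ) (hak : (0:ℝ) < c - k) (hbk : (0:ℝ) < c - 4*k)
    (K : ℝ) (lam r : ℂ) (hK : ‖lam‖ ≤ K)
    (hr : ((c:ℂ)-(k:ℂ)) * r^3 - lam * r^2 - ((c:ℂ)-4*(k:ℂ))*r + lam = 0) :
    ‖r‖ ≤ max 1 ((2*K + (c - 4*k))/(c-k)) := by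
  have hK0 : 0 ≤ K := le_trans (norm_nonneg _) hK
  by_cases hn : ‖r‖ ≤ 1
  · exact le_trans hn (le_max_left _ _)
  push_neg at hn
  have h2 : ((c:ℂ)-(k:ℂ))*r^3 = lam*r^2 + ((c:ℂ)-4*(k:ℂ))*r - lam := by
    linear_combination hr
  have hnormA : ‖((c:ℂ)-(k:ℂ))‖ = c - k := by
    rw [show ((c:ℂ)-(k:ℂ)) = ((c - k : ℝ) : ℂ) by push_cast; ring]
    rw [Complex.norm_real]
    exact abs_of_pos hak
  have hnormB : ‖((c:ℂ)-4*(k:ℂ))‖ = c - 4*k := by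
    rw [show ((c:ℂ)-4*(k:ℂ)) = ((c - 4*k : ℝ) : ℂ) by push_cast; ring]
    rw [Complex.norm_real]
    exact abs_of_pos hbk
  have hle : (c-k) * ‖r‖^3 ≤ K * ‖r‖^2 + (c-4*k) * ‖r‖ + K := by
    have h3 : ‖((c:ℂ)-(k:ℂ))*r^3‖ ≤ ‖lam*r^2 + ((c:ℂ)-4*(k:ℂ))*r‖ + ‖lam‖ := by
      rw [h2]; exact norm_sub_le _ _
    have h4 : ‖lam*r^2 + ((c:ℂ)-4*(k:ℂ))*r‖ ≤ ‖lam‖*‖r‖^2 + (c-4*k)*‖r‖ := by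
      calc ‖lam*r^2 + ((c:ℂ)-4*(k:ℂ))*r‖ ≤ ‖lam*r^2‖ + ‖((c:ℂ)-4*(k:ℂ))*r‖ := norm_add_le _ _
      _ = ‖lam‖*‖r‖^2 + (c-4*k)*‖r‖ := by rw [norm_mul, norm_mul, norm_pow, hnormB]
    rw [norm_mul, norm_pow, hnormA] at h3
    have h5 : ‖lam‖*‖r‖^2 ≤ K*‖r‖^2 := by nlinarith [sq_nonneg ‖r‖]
    linarith
  have hr2 : (0:ℝ) < ‖r‖^2 := by positivity
  have hpos : 0 < ‖r‖ * (‖r‖ - 1) := mul_pos (by linarith) (by linarith)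
  have hsq : 1 < ‖r‖^2 := by nlinarith
  have h7 : (c-4*k)*‖r‖ ≤ (c-4*k)*‖r‖^2 := by nlinarith [mul_pos hbk hpos]
  have h8 : K ≤ K*‖r‖^2 := by nlinarith [mul_nonneg hK0 (by linarith : (0:ℝ) ≤ ‖r‖^2 - 1)]
  have h9 : (c-k)*‖r‖^3 ≤ (2*K + (c-4*k))*‖r‖^2 := by linarith
  have h6 : (c-k) * ‖r‖ ≤ 2*K + (c-4*k) := by
    by_contra hcon
    push_neg at hcon
    nlinarith [mul_lt_mul_of_pos_right hcon hr2]
  refine le_trans ?_ (le_max_right _ _)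
  rw [le_div_iff₀ hak]
  linarith

lemma locConst (c k α : ℝ) (hk : 0 < k) (hck : 4*k < c) (hα0 : 0 < α)
    (hα : α < Real.sqrt ((c-4*k)/(c-k)))
    (lam₀ : ℂ) (h₀ : 0 ≤ lam₀.re) :
    ∃ ε > 0, ∀ lam : ℂ, 0 ≤ lam.re → ‖lam - lam₀‖ < ε → N c k α lam = N c k α lam₀ := by
  have hak : (0:ℝ) < c - k := by linarith
  have hbk : (0:ℝ) < c - 4*k := by linarith
  by_contra hcon
  push_neg at hcon
  have hseq : ∀ n : ℕ, ∃ lam : ℂ, 0 ≤ lam.re ∧ ‖lam - lam₀‖ < 1/(n+1) ∧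
      N c k α lam ≠ N c k α lam₀ := by
    intro n
    obtain ⟨lam, h1, h2, h3⟩ := hcon (1/(n+1)) (by positivity)
    exact ⟨lam, h1, h2, h3⟩
  choose L hL1 hL2 hL3 using hseq
  have hLtend : Filter.Tendsto L Filter.atTop (nhds lam₀) := by
    rw [tendsto_iff_norm_sub_tendsto_zero]
    apply squeeze_zero (fun n => norm_nonneg _) (fun n => (hL2 n).le)
    exact tendsto_one_div_add_atTop_nhds_zero_nat
  have hFn : ∀ n, ∃ r s t : ℂ, Fct c k (L n) r s t := fun n => exists_fct c k hak (L n)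
  choose R S T hF using hFn
  set K := ‖lam₀‖ + 1 with hK
  have hLK : ∀ n, ‖L n‖ ≤ K := by
    intro n
    have h0 : (0:ℝ) ≤ (n:ℝ) := Nat.cast_nonneg n
    have h1 : ‖L n - lam₀‖ < 1 := by
      refine lt_of_lt_of_le (hL2 n) ?_
      rw [div_le_one (by positivity)]
      linarith
    calc ‖L n‖ = ‖(L n - lam₀) + lam₀‖ := by ring_nf
    _ ≤ ‖L n - lam₀‖ + ‖lam₀‖ := norm_add_le _ _
    _ ≤ K := by rw [hK]; linarith
  set M := max 1 ((2*K + (c - 4*k))/(c-k)) with hM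
  have hRootR : ∀ n, ((c:ℂ)-(k:ℂ)) * (R n)^3 - (L n) * (R n)^2
      - ((c:ℂ)-4*(k:ℂ))*(R n) + (L n) = 0 := by
    intro n; rw [hF n (R n)]; ring
  have hRootS : ∀ n, ((c:ℂ)-(k:ℂ)) * (S n)^3 - (L n) * (S n)^2
      - ((c:ℂ)-4*(k:ℂ))*(S n) + (L n) = 0 := by
    intro n; rw [hF n (S n)]; ring
  have hRootT : ∀ n, ((c:ℂ)-(k:ℂ)) * (T n)^3 - (L n) * (T n)^2
      - ((c:ℂ)-4*(k:ℂ))*(T n) + (L n) = 0 := by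
    intro n; rw [hF n (T n)]; ring
  have hmemR : ∀ n, R n ∈ Metric.closedBall (0:ℂ) M := by
    intro n; rw [Metric.mem_closedBall, dist_zero_right]
    exact root_bound c k hak hbk K (L n) (R n) (hLK n) (hRootR n)
  have hmemS : ∀ n, S n ∈ Metric.closedBall (0:ℂ) M := by
    intro n; rw [Metric.mem_closedBall, dist_zero_right]
    exact root_bound c k hak hbk K (L n) (S n) (hLK n) (hRootS n)
  have hmemT : ∀ n, T n ∈ Metric.closedBall (0:ℂ) M := by
    intro n; rw [Metric.mem_closedBall, dist_zero_right]
    exact root_bound c k hak hbk K (L n) (T n) (hLK n) (hRootT n)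
  obtain ⟨rs, -, φ₁, hφ₁, hRlim⟩ :=
    tendsto_subseq_of_bounded Metric.isBounded_closedBall hmemR
  obtain ⟨ss, -, φ₂, hφ₂, hSlim⟩ :=
    tendsto_subseq_of_bounded Metric.isBounded_closedBall (fun n => hmemS (φ₁ n))
  obtain ⟨ts, -, φ₃, hφ₃, hTlim⟩ :=
    tendsto_subseq_of_bounded Metric.isBounded_closedBall (fun n => hmemT (φ₁ (φ₂ n)))
  set ψ : ℕ → ℕ := fun n => φ₁ (φ₂ (φ₃ n)) with hψ
  have hψtend : Filter.Tendsto ψ Filter.atTop Filter.atTop :=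
    (hφ₁.comp (hφ₂.comp hφ₃)).tendsto_atTop
  have hRψ : Filter.Tendsto (fun n => R (ψ n)) Filter.atTop (nhds rs) :=
    hRlim.comp (hφ₂.comp hφ₃).tendsto_atTop
  have hSψ : Filter.Tendsto (fun n => S (ψ n)) Filter.atTop (nhds ss) :=
    hSlim.comp hφ₃.tendsto_atTop
  have hTψ : Filter.Tendsto (fun n => T (ψ n)) Filter.atTop (nhds ts) := hTlim
  have hLψ : Filter.Tendsto (fun n => L (ψ n)) Filter.atTop (nhds lam₀) :=
    hLtend.comp hψtend
  have hFstar : Fct c k lam₀ rs ss ts := by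
    intro z
    have h1 : Filter.Tendsto (fun n => ((c:ℂ)-(k:ℂ)) * z^3 - (L (ψ n)) * z^2
        - ((c:ℂ)-4*(k:ℂ))*z + (L (ψ n))) Filter.atTop
        (nhds (((c:ℂ)-(k:ℂ)) * z^3 - lam₀ * z^2 - ((c:ℂ)-4*(k:ℂ))*z + lam₀)) :=
      ((tendsto_const_nhds.sub (hLψ.mul tendsto_const_nhds)).sub tendsto_const_nhds).add hLψ
    have h2 : Filter.Tendsto (fun n => ((c:ℂ)-(k:ℂ)) * ((z - R (ψ n)) * ((z - S (ψ n))
        * (z - T (ψ n))))) Filter.atTop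
        (nhds (((c:ℂ)-(k:ℂ)) * ((z - rs) * ((z - ss) * (z - ts))))) :=
      tendsto_const_nhds.mul ((tendsto_const_nhds.sub hRψ).mul
        ((tendsto_const_nhds.sub hSψ).mul (tendsto_const_nhds.sub hTψ)))
    have h3 : (fun n => ((c:ℂ)-(k:ℂ)) * z^3 - (L (ψ n)) * z^2 - ((c:ℂ)-4*(k:ℂ))*z + (L (ψ n)))
        = (fun n => ((c:ℂ)-(k:ℂ)) * ((z - R (ψ n)) * ((z - S (ψ n)) * (z - T (ψ n))))) :=
      funext fun n => hF (ψ n) z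
    rw [h3] at h1
    exact tendsto_nhds_unique h1 h2
  have hRoot_rs : ((c:ℂ)-(k:ℂ)) * rs^3 - lam₀ * rs^2 - ((c:ℂ)-4*(k:ℂ))*rs + lam₀ = 0 := by
    rw [hFstar rs]; ring
  have hRoot_ss : ((c:ℂ)-(k:ℂ)) * ss^3 - lam₀ * ss^2 - ((c:ℂ)-4*(k:ℂ))*ss + lam₀ = 0 := by
    rw [hFstar ss]; ring
  have hRoot_ts : ((c:ℂ)-(k:ℂ)) * ts^3 - lam₀ * ts^2 - ((c:ℂ)-4*(k:ℂ))*ts + lam₀ = 0 := by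
    rw [hFstar ts]; ring
  have hners := noline c k α hk hck hα0 hα lam₀ h₀ rs hRoot_rs
  have hness := noline c k α hk hck hα0 hα lam₀ h₀ ss hRoot_ss
  have hnets := noline c k α hk hck hα0 hα lam₀ h₀ ts hRoot_ts
  have hev : ∀ (Z : ℕ → ℂ) (zs : ℂ), Filter.Tendsto Z Filter.atTop (nhds zs) → zs.re ≠ -α →
      ∀ᶠ n in Filter.atTop,
        ((if (Z n).re < -α then 1 else 0) : ℕ) = if zs.re < -α then 1 else 0 := by
    intro Z zs hZ hne
    have hre : Filter.Tendsto (fun n => (Z n).re) Filter.atTop (nhds zs.re) :=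
      (Complex.continuous_re.tendsto zs).comp hZ
    rcases lt_or_gt_of_ne hne with h | h
    · filter_upwards [hre.eventually_lt_const h] with n hn
      rw [if_pos hn, if_pos h]
    · filter_upwards [hre.eventually_const_lt h] with n hn
      rw [if_neg (not_lt.2 hn.le), if_neg (not_lt.2 h.le)]
  obtain ⟨n, hn1, hn2, hn3⟩ := ((hev _ _ hRψ hners).and
    ((hev _ _ hSψ hness).and (hev _ _ hTψ hnets))).exists
  have hNn : N c k α (L (ψ n)) = N c k α lam₀ := by
    rw [N_fct c k α hak _ _ _ _ (hF (ψ n)), N_fct c k α hak _ _ _ _ hFstar, hn1, hn2, hn3]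
  exact hL3 (ψ n) hNn

lemma fct_zero (c k : ℝ) (hk : 0 < k) (hck : 4*k < c) :
    Fct c k 0 (-((Real.sqrt ((c-4*k)/(c-k)) : ℝ) : ℂ))
      ((Real.sqrt ((c-4*k)/(c-k)) : ℝ) : ℂ) 0 := by
  have hak : (0:ℝ) < c - k := by linarith
  have hbk : (0:ℝ) < c - 4*k := by linarith
  have hq : (0:ℝ) ≤ (c-4*k)/(c-k) := by positivity
  have hsq : (Real.sqrt ((c-4*k)/(c-k)))^2 * (c-k) = c-4*k := by
    rw [Real.sq_sqrt hq]; field_simp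
  have hsqC : ((Real.sqrt ((c-4*k)/(c-k)) : ℝ) : ℂ)^2 * ((c:ℂ)-(k:ℂ)) = (c:ℂ)-4*(k:ℂ) := by
    have := congrArg (fun x : ℝ => (x : ℂ)) hsq
    push_cast at this
    push_cast
    linear_combination this
  intro z
  linear_combination z * hsqC

lemma N_zero (c k α : ℝ) (hk : 0 < k) (hck : 4*k < c) (hα0 : 0 < α)
    (hα : α < Real.sqrt ((c-4*k)/(c-k))) : N c k α 0 = 1 := by
  have hak : (0:ℝ) < c - k := by linarith
  have hβ : 0 < Real.sqrt ((c-4*k)/(c-k)) := lt_trans hα0 hα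
  rw [N_fct c k α hak _ _ _ _ (fct_zero c k hk hck)]
  rw [if_pos (by simpa using (by linarith : -Real.sqrt ((c-4*k)/(c-k)) < -α)),
    if_neg (by simpa using (by linarith : ¬ Real.sqrt ((c-4*k)/(c-k)) < -α)),
    if_neg (by simpa using (by linarith : ¬ (0:ℝ) < -α))]

end DPWeighted

open DPWeighted

/-- For `0 < k`, `4k < c`, `0 < α < √((c−4k)/(c−k))` and `Re λ ≥ 0`,
the characteristic polynomial `(c − k) r³ − λ r² − (c − 4k) r + λ` has (with
multiplicity) exactly one root with `Re r < −α` and exactly two roots with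
`Re r > −α`, and no root with `Re r = −α`. -/
theorem dp_characteristic_roots_weighted (c k α : ℝ) (hk : 0 < k) (hck : 4 * k < c)
    (hα0 : 0 < α) (hα : α < Real.sqrt ((c - 4 * k) / (c - k)))
    (lam : ℂ) (hlam : 0 ≤ lam.re) :
    Multiset.card
        (((C ((c : ℂ) - (k : ℂ)) * X ^ 3 - C lam * X ^ 2
            - C ((c : ℂ) - 4 * (k : ℂ)) * X + C lam : ℂ[X]).roots).filter
          fun r => r.re < -α) = 1 ∧
    Multiset.card
        (((C ((c : ℂ) - (k : ℂ)) * X ^ 3 - C lam * X ^ 2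
            - C ((c : ℂ) - 4 * (k : ℂ)) * X + C lam : ℂ[X]).roots).filter
          fun r => -α < r.re) = 2 ∧
    ∀ r ∈ (C ((c : ℂ) - (k : ℂ)) * X ^ 3 - C lam * X ^ 2
        - C ((c : ℂ) - 4 * (k : ℂ)) * X + C lam : ℂ[X]).roots, r.re ≠ -α := by
  
  have hck' : 4*k < c := hck
  have hα' : α < Real.sqrt ((c-4*k)/(c-k)) := hα
  have hak : (0:ℝ) < c - k := by linarith
  set p : ℂ[X] := C ((c : ℂ) - (k : ℂ)) * X ^ 3 - C lam * X ^ 2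
      - C ((c : ℂ) - 4 * (k : ℂ)) * X + C lam with hp
  -- no roots on the line
  have h3 : ∀ r ∈ p.roots, r.re ≠ -α := by
    intro r hr
    have hr0 : p.eval r = 0 := (Polynomial.isRoot_of_mem_roots hr)
    have hsc : ((c:ℂ)-(k:ℂ)) * r^3 - lam * r^2 - ((c:ℂ)-4*(k:ℂ))*r + lam = 0 := by
      rw [hp] at hr0
      simpa using hr0
    exact noline c k α hk hck' hα0 hα' lam hlam r hsc
  -- N lam = 1 by local constancy on the preconnected right half-plane
  have hconv : Convex ℝ {z : ℂ | 0 ≤ z.re} := convex_halfSpace_re_ge 0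
  haveI : PreconnectedSpace {z : ℂ // 0 ≤ z.re} :=
    Subtype.preconnectedSpace hconv.isPreconnected
  have hlc : IsLocallyConstant (fun z : {z : ℂ // 0 ≤ z.re} => N c k α z.1) := by
    rw [IsLocallyConstant.iff_exists_open]
    rintro ⟨lam₀, h₀⟩
    obtain ⟨ε, hε, hloc⟩ := locConst c k α hk hck' hα0 hα' lam₀ h₀
    refine ⟨Metric.ball ⟨lam₀, h₀⟩ ε, Metric.isOpen_ball, Metric.mem_ball_self hε, ?_⟩
    rintro ⟨lam', h'⟩ hmem
    exact hloc lam' h'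
      (by simpa [Metric.mem_ball, Subtype.dist_eq, dist_eq_norm] using hmem)
  have h1 : N c k α lam = 1 := by
    have heq := hlc.apply_eq_of_preconnectedSpace ⟨lam, hlam⟩ ⟨0, by simp⟩
    simp only at heq
    rw [heq, N_zero c k α hk hck' hα0 hα']
  have h1' : Multiset.card (p.roots.filter fun r => r.re < -α) = 1 := h1
  refine ⟨h1', ?_, h3⟩
  -- total count is 3
  obtain ⟨r, s, t, hF⟩ := exists_fct c k hak lam
  have hroots : p.roots = {r, s, t} := roots_eq c k hak lam r s t hF
  have hcard3 : Multiset.card p.roots = 3 := by rw [hroots]; simp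
  have hfilt : (p.roots.filter fun z => -α < z.re)
      = p.roots.filter (fun z => ¬ z.re < -α) := by
    apply Multiset.filter_congr
    intro z hz
    have hne := h3 z hz
    constructor
    · intro h; exact not_lt.2 h.le
    · intro h
      rcases lt_or_gt_of_ne hne with h' | h'
      · exact absurd h' h
      · exact h'
  have hsum := congrArg Multiset.card
    (Multiset.filter_add_not (fun z => z.re < -α) p.roots)
  rw [Multiset.card_add, hcard3] at hsum
  rw [hfilt]
  omega
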